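/- Let the address space be partitioned into segments with positions assigned as above, let p_i be a peer with position pos_i = p 1 0^k, k ≥ 1, and suppose at least one peer occupies a position in the subtree rooted at CW[pos_i]. Then among the peers occupying positions in that subtree, there is one whose position is a fore-parent (ancestor under repeated UP) of the positions of all the others. The same holds for the subtree rooted at CCW[pos_i]. -/

import Mathlib

/-- Number of trailing zero bits (2-adic valuation) of an address. -/
def tz (x : ℕ) : ℕ := padicValNat 2 x

/-- Clockwise descendant: `p 1 0^k ↦ p 1 1 0^(k-1)` (meaningful for `1 ≤ tz x`). -/
def CW (x : ℕ) : ℕ := x + 2 ^ (tz x - 1)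

/-- Counterclockwise descendant: `p 1 0^k ↦ p 0 1 0^(k-1)` (meaningful for `1 ≤ tz x`). -/
def CCW (x : ℕ) : ℕ := x - 2 ^ (tz x - 1)

/-- Parent map: `q c 1 0^m ↦ q 1 0^(m+1)`. -/
def UP (x : ℕ) : ℕ := x / 2 ^ (tz x + 2) * 2 ^ (tz x + 2) + 2 ^ (tz x + 1)

/-- One tree step from `a` to a child `b`. -/
def step (a b : ℕ) : Prop := 1 ≤ tz a ∧ (b = CW a ∨ b = CCW a)

/-- The subtree of `x`: addresses reachable by repeated `CW`/`CCW`, including `x`. -/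
def subtree (x : ℕ) : Set ℕ := {y | Relation.ReflTransGen step x y}

/-- `Pos a b = p 1 0^k` where `p` is the longest common binary prefix of `a` and `b`. -/
def Pos (a b : ℕ) : ℕ :=
  b / 2 ^ (Nat.log 2 (a ^^^ b) + 1) * 2 ^ (Nat.log 2 (a ^^^ b) + 1) + 2 ^ Nat.log 2 (a ^^^ b)
/-- Position of peer `i`: the peer whose segment contains the all-zero address (peer 0)
takes the root position 0; peer `i ≥ 1` with segment `(a (i-1), a i]` takes `Pos` of it. -/
def pos (a : ℕ → ℕ) (i : ℕ) : ℕ := if i = 0 then 0 else Pos (a (i - 1)) (a i)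

/-! ### Auxiliary lemmas about `tz` -/

lemma tz_dvd (x : ℕ) : 2 ^ tz x ∣ x := pow_padicValNat_dvd

lemma tz_dvd_iff {x s : ℕ} (hx : x ≠ 0) : 2 ^ s ∣ x ↔ s ≤ tz x :=
  padicValNat_dvd_iff_le hx

lemma tz_not_dvd {x : ℕ} (hx : x ≠ 0) : ¬ 2 ^ (tz x + 1) ∣ x := by
  rw [tz_dvd_iff hx]; omega

lemma tz_mul_odd {k o : ℕ} (ho : Odd o) : tz (2 ^ k * o) = k := by
  have h0 : (2:ℕ) ^ k * o ≠ 0 := by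
    have : o ≠ 0 := by rintro rfl; simp [Nat.odd_iff] at ho
    positivity
  have h1 : (2:ℕ) ^ k ∣ 2 ^ k * o := dvd_mul_right _ _
  have h2 : ¬ (2:ℕ) ^ (k+1) ∣ 2 ^ k * o := by
    rintro ⟨c, hc⟩
    have : o = 2 * c := by
      have := hc
      rw [pow_succ] at this
      have h2k : (0:ℕ) < 2 ^ k := by positivity
      nlinarith [Nat.odd_iff.mp ho]
    rw [Nat.odd_iff, this] at ho; omega
  rw [tz_dvd_iff h0] at h1
  by_contra hne
  have : k + 1 ≤ tz (2 ^ k * o) ∨ tz (2^k*o) < k := by omega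
  rcases this with h | h
  · exact h2 ((tz_dvd_iff h0).mpr h)
  · exact absurd h1 (by omega)

lemma tz_decomp {x : ℕ} (hx : x ≠ 0) : ∃ o, Odd o ∧ x = 2 ^ tz x * o := by
  obtain ⟨o, ho⟩ := tz_dvd x
  refine ⟨o, ?_, ho⟩
  rw [Nat.odd_iff]
  by_contra h
  have : 2 ∣ o := by omega
  obtain ⟨c, hc⟩ := this
  exact tz_not_dvd hx ⟨c, by rw [pow_succ, mul_assoc, ← hc]; exact ho⟩

lemma pow_tz_le_self {x : ℕ} (hx : x ≠ 0) : 2 ^ tz x ≤ x :=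
  Nat.le_of_dvd (Nat.pos_of_ne_zero hx) (tz_dvd x)

/-! ### The subtree of a node is an interval -/

lemma children {x k : ℕ} (hx : x ≠ 0) (htz : tz x = k + 1) :
    CW x = x + 2 ^ k ∧ CCW x = x - 2 ^ k ∧ 2 ^ (k+1) ≤ x ∧
    tz (CW x) = k ∧ tz (CCW x) = k ∧ CW x ≠ 0 ∧ CCW x ≠ 0 := by
  obtain ⟨o, ho, hdec⟩ := tz_decomp hx
  rw [htz] at hdec
  have ho1 : 1 ≤ o := Nat.one_le_iff_ne_zero.mpr (by rintro rfl; simp [Nat.odd_iff] at ho)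
  have hcw : CW x = x + 2 ^ k := by rw [CW, htz]; simp
  have hccw : CCW x = x - 2 ^ k := by rw [CCW, htz]; simp
  have hps : (2:ℕ) ^ (k+1) = 2 ^ k * 2 := pow_succ 2 k
  have hxe : x = 2 ^ k * (2 * o) := by rw [hdec, hps]; ring
  have hxge : 2 ^ (k+1) ≤ x := by
    calc 2^(k+1) = 2^(k+1) * 1 := by ring
    _ ≤ 2^(k+1) * o := by exact Nat.mul_le_mul_left _ ho1
    _ = x := hdec.symm
  have hcw2 : CW x = 2 ^ k * (2 * o + 1) := by rw [hcw, hxe]; ring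
  have hccw2 : CCW x = 2 ^ k * (2 * o - 1) := by
    rw [hccw, hxe, Nat.mul_sub]
    simp
  have h2o1 : Odd (2 * o + 1) := by rw [Nat.odd_iff]; omega
  have h2o2 : Odd (2 * o - 1) := by rw [Nat.odd_iff]; omega
  refine ⟨hcw, hccw, hxge, ?_, ?_, ?_, ?_⟩
  · rw [hcw2, tz_mul_odd h2o1]
  · rw [hccw2, tz_mul_odd h2o2]
  · rw [hcw2]; positivity
  · rw [hccw2]
    have : 0 < 2 * o - 1 := by omega
    positivity

lemma subtree_mem {x y : ℕ} (hx : x ≠ 0) (hy : y ∈ subtree x) :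
    y ≠ 0 ∧ x + 2 ^ tz y ≤ y + 2 ^ tz x ∧ y + 2 ^ tz y ≤ x + 2 ^ tz x := by
  induction hy with
  | refl => exact ⟨hx, le_refl _, le_refl _⟩
  | tail _ hstep ih =>
    rename_i b c _
    obtain ⟨hb, h1, h2⟩ := ih
    obtain ⟨htb, hbc⟩ := hstep
    obtain ⟨k, hk⟩ : ∃ k, tz b = k + 1 := ⟨tz b - 1, by omega⟩
    obtain ⟨hcw, hccw, hge, htcw, htccw, hcw0, hccw0⟩ := children hb hk
    have hps : (2:ℕ) ^ (k+1) = 2 ^ k * 2 := pow_succ 2 k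
    rw [hk] at h1 h2
    rcases hbc with rfl | rfl
    · refine ⟨hcw0, ?_, ?_⟩ <;> rw [htcw, hcw] <;> omega
    · refine ⟨hccw0, ?_, ?_⟩ <;> rw [htccw, hccw] <;> omega

lemma subtree_of_mem : ∀ k x, x ≠ 0 → tz x = k →
    ∀ u, x < u + 2 ^ k → u < x + 2 ^ k → u ∈ subtree x := by
  intro k
  induction k with
  | zero =>
    intro x hx htz u h1 h2
    have : u = x := by simpa using Nat.le_antisymm (by omega) (by omega)
    rw [this]; exact Relation.ReflTransGen.refl
  | succ k ih =>
    intro x hx htz u h1 h2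
    obtain ⟨hcw, hccw, hge, htcw, htccw, hcw0, hccw0⟩ := children hx htz
    have hps : (2:ℕ) ^ (k+1) = 2 ^ k * 2 := pow_succ 2 k
    rcases Nat.lt_trichotomy u x with h | h | h
    · refine Relation.ReflTransGen.head ⟨by omega, Or.inr rfl⟩ (ih (CCW x) hccw0 htccw u ?_ ?_) <;> omega
    · rw [h]; exact Relation.ReflTransGen.refl
    · refine Relation.ReflTransGen.head ⟨by omega, Or.inl rfl⟩ (ih (CW x) hcw0 htcw u ?_ ?_) <;> omega

lemma subtree_iff {x u : ℕ} (hx : x ≠ 0) :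
    u ∈ subtree x ↔ x < u + 2 ^ tz x ∧ u < x + 2 ^ tz x := by
  constructor
  · intro h
    obtain ⟨hu, h1, h2⟩ := subtree_mem hx h
    have := Nat.one_le_two_pow (n := tz u)
    constructor <;> omega
  · rintro ⟨h1, h2⟩
    exact subtree_of_mem _ x hx rfl u h1 h2

/-! ### Properties of `Pos` -/

lemma shiftRight_xor (a b i : ℕ) : (a ^^^ b) >>> i = (a >>> i) ^^^ (b >>> i) := by
  apply Nat.eq_of_testBit_eq
  intro j
  simp [Nat.testBit_shiftRight, Nat.testBit_xor]

lemma div_xor (a b i : ℕ) : (a ^^^ b) / 2 ^ i = (a / 2 ^ i) ^^^ (b / 2 ^ i) := by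
  rw [← Nat.shiftRight_eq_div_pow, ← Nat.shiftRight_eq_div_pow, ← Nat.shiftRight_eq_div_pow,
    shiftRight_xor]

lemma Pos_spec {a b : ℕ} (hab : a < b) :
    a < Pos a b ∧ Pos a b ≤ b ∧ tz (Pos a b) = Nat.log 2 (a ^^^ b) ∧
      ∀ u, a < u → u ≤ b → tz u ≤ Nat.log 2 (a ^^^ b) := by
  set e := Nat.log 2 (a ^^^ b) with he
  clear_value e
  have hne : a ^^^ b ≠ 0 := by
    rw [Ne, Nat.xor_eq_zero_iff]; omega
  have hlow : 2 ^ e ≤ a ^^^ b := by rw [he]; exact Nat.pow_log_le_self 2 hne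
  have hhigh : a ^^^ b < 2 ^ (e + 1) := by rw [he]; exact Nat.lt_pow_succ_log_self (by norm_num) _
  have hP : (0:ℕ) < 2 ^ e := by positivity
  have hps : (2:ℕ) ^ (e+1) = 2 ^ e * 2 := pow_succ 2 e
  have hdiv1 : (a ^^^ b) / 2 ^ e = 1 := by
    have h1 : 1 ≤ (a ^^^ b) / 2 ^ e := (Nat.one_le_div_iff hP).mpr hlow
    have h2 : (a ^^^ b) / 2 ^ e < 2 := by
      rw [Nat.div_lt_iff_lt_mul hP]; omega
    omega
  have hA : (a / 2 ^ e) ^^^ (b / 2 ^ e) = 1 := by rw [← div_xor, hdiv1]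
  have hAB2 : (a / 2 ^ e) / 2 = (b / 2 ^ e) / 2 := by
    rw [← Nat.xor_eq_zero_iff]
    have : ((a / 2 ^ e) ^^^ (b / 2 ^ e)) >>> 1 = 0 := by rw [hA]; decide
    rwa [shiftRight_xor, Nat.shiftRight_eq_div_pow, Nat.shiftRight_eq_div_pow, pow_one] at this
  have hle : a / 2 ^ e ≤ b / 2 ^ e := Nat.div_le_div_right hab.le
  have hne' : a / 2 ^ e ≠ b / 2 ^ e := by
    intro h; rw [h, Nat.xor_self] at hA; omega
  set c := (b / 2 ^ e) / 2 with hc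
  clear_value c
  have hb2 : b / 2 ^ e = 2 * c + 1 := by omega
  have ha2 : a / 2 ^ e = 2 * c := by omega
  have hdd : ∀ n : ℕ, n / 2 ^ (e + 1) = (n / 2 ^ e) / 2 := by
    intro n; rw [Nat.div_div_eq_div_mul, hps]
  have hbq : b / 2 ^ (e + 1) = c := by rw [hdd, ← hc]
  have haq : a / 2 ^ (e + 1) = c := by rw [hdd, ha2]; omega
  have hPos : Pos a b = 2 ^ e * (2 * c + 1) := by
    rw [Pos, ← he, hbq, hps]; ring
  have hdma := Nat.div_add_mod a (2 ^ e)
  have hmma : a % 2 ^ e < 2 ^ e := Nat.mod_lt _ hP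
  have hdmb := Nat.div_add_mod b (2 ^ e)
  rw [ha2] at hdma
  rw [hb2] at hdmb
  refine ⟨?_, ?_, ?_, ?_⟩
  · rw [hPos]
    calc a = 2 ^ e * (2 * c) + a % 2 ^ e := hdma.symm
    _ < 2 ^ e * (2 * c) + 2 ^ e := by omega
    _ = 2 ^ e * (2 * c + 1) := (Nat.mul_succ _ _).symm
  · rw [hPos]; exact Nat.le.intro hdmb
  · rw [hPos, tz_mul_odd (by rw [Nat.odd_iff]; omega)]
  · intro u hu1 hu2
    by_contra hcon
    have hu0 : u ≠ 0 := by omega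
    have : 2 ^ (e + 1) ∣ u := (tz_dvd_iff hu0).mpr (by omega)
    obtain ⟨m, hm⟩ := this
    have hma : c < m := by
      by_contra hmc
      have h1 : u ≤ 2 ^ (e+1) * c := by
        rw [hm]; exact Nat.mul_le_mul_left _ (by omega)
      have h2 : 2 ^ (e+1) * c ≤ a := by
        calc 2 ^ (e+1) * c = a / 2 ^ (e+1) * 2 ^ (e+1) := by rw [haq]; ring
        _ ≤ a := Nat.div_mul_le_self _ _
      omega
    have h1 : 2 ^ (e+1) * (c+1) ≤ u := by
      rw [hm]; exact Nat.mul_le_mul_left _ (by omega)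
    have h2 : b < 2 ^ (e+1) * (c+1) := by
      have hdmb' := Nat.div_add_mod b (2 ^ (e+1))
      have : b % 2 ^ (e+1) < 2 ^ (e+1) := Nat.mod_lt _ (by positivity)
      rw [hbq] at hdmb'
      calc b = 2 ^ (e+1) * c + b % 2 ^ (e+1) := hdmb'.symm
      _ < 2 ^ (e+1) * c + 2 ^ (e+1) := by omega
      _ = 2 ^ (e+1) * (c+1) := by ring
    omega

/-! ### Segments -/

lemma seg_exists {N : ℕ} {a : ℕ → ℕ} {u : ℕ}
    (h1 : a 0 < u) (h2 : u ≤ a N) :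
    ∃ l, 1 ≤ l ∧ l ≤ N ∧ a (l-1) < u ∧ u ≤ a l := by
  have hex : ∃ l, u ≤ a l := ⟨N, h2⟩
  refine ⟨Nat.find hex, ?_, Nat.find_min' hex h2, ?_, Nat.find_spec hex⟩
  · rcases Nat.eq_zero_or_pos (Nat.find hex) with h | h
    · exfalso; have := Nat.find_spec hex; rw [h] at this; omega
    · omega
  · have h0 : 1 ≤ Nat.find hex := by
      rcases Nat.eq_zero_or_pos (Nat.find hex) with h | h
      · exfalso; have := Nat.find_spec hex; rw [h] at this; omega
      · omega
    have := Nat.find_min hex (m := Nat.find hex - 1) (by omega)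
    omega

lemma seg_unique {N : ℕ} {a : ℕ → ℕ} (hmono : StrictMonoOn a (Set.Iic N))
    {j l y : ℕ} (hj1 : 1 ≤ j) (hjN : j ≤ N) (hl1 : 1 ≤ l) (hlN : l ≤ N)
    (hyj1 : a (j-1) < y) (hyj2 : y ≤ a j) (hyl1 : a (l-1) < y) (hyl2 : y ≤ a l) :
    j = l := by
  have hmo := hmono.monotoneOn
  rcases Nat.lt_trichotomy j l with h | h | h
  · have : a j ≤ a (l-1) := hmo (by simp; omega) (by simp; omega) (by omega)
    omega
  · exact h
  · have : a l ≤ a (j-1) := hmo (by simp; omega) (by simp; omega) (by omega)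
    omega

lemma pos_seg {N : ℕ} {a : ℕ → ℕ} (hmono : StrictMonoOn a (Set.Iic N))
    {j : ℕ} (hj1 : 1 ≤ j) (hjN : j ≤ N) :
    a (j-1) < pos a j ∧ pos a j ≤ a j ∧
      ∀ u, a (j-1) < u → u ≤ a j → tz u ≤ tz (pos a j) := by
  have hab : a (j-1) < a j := hmono (by simp; omega) (by simp; omega) (by omega)
  have hps := Pos_spec hab
  have hpj : pos a j = Pos (a (j-1)) (a j) := by rw [pos, if_neg (by omega)]
  rw [hpj]
  exact ⟨hps.1, hps.2.1, fun u h1 h2 => by rw [hps.2.2.1]; exact hps.2.2.2 u h1 h2⟩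

/-! ### Main lemma -/

lemma main_lemma {N : ℕ} {a : ℕ → ℕ} (hmono : StrictMonoOn a (Set.Iic N))
    {r : ℕ} (hr : r ≠ 0)
    (hex : ∃ j ≤ N, pos a j ∈ subtree r) :
    ∃ j ≤ N, pos a j ∈ subtree r ∧
      ∀ j' ≤ N, pos a j' ∈ subtree r → pos a j' ∈ subtree (pos a j) := by
  classical
  set m := tz r with hm
  -- the set of peers with positions in the subtree of r
  set S : Finset ℕ := (Finset.range (N+1)).filter (fun j => pos a j ∈ subtree r) with hS
  have hSmem : ∀ j, j ∈ S ↔ j ≤ N ∧ pos a j ∈ subtree r := by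
    intro j; simp [hS, Finset.mem_filter, Finset.mem_range]
  obtain ⟨j0, hj0N, hj0r⟩ := hex
  have hSne : S.Nonempty := ⟨j0, (hSmem j0).mpr ⟨hj0N, hj0r⟩⟩
  obtain ⟨j, hjS, hjmax⟩ := S.exists_max_image (fun j => tz (pos a j)) hSne
  obtain ⟨hjN, hjr⟩ := (hSmem j).mp hjS
  -- basic facts about y = pos a j
  have hy0 : pos a j ≠ 0 := (subtree_mem hr hjr).1
  have hj1 : 1 ≤ j := by
    rcases Nat.eq_zero_or_pos j with h | h
    · exfalso; apply hy0; rw [h, pos, if_pos rfl]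
    · omega
  set y := pos a j with hy
  set t := tz y with ht
  obtain ⟨hyseg1, hyseg2, _⟩ := pos_seg hmono hj1 hjN
  have hyint := (subtree_iff hr).mp hjr
  refine ⟨j, hjN, hjr, ?_⟩
  intro j' hj'N hj'r
  have hy'0 : pos a j' ≠ 0 := (subtree_mem hr hj'r).1
  have hj'1 : 1 ≤ j' := by
    rcases Nat.eq_zero_or_pos j' with h | h
    · exfalso; apply hy'0; rw [h, pos, if_pos rfl]
    · omega
  set y' := pos a j' with hy'
  obtain ⟨hy'seg1, hy'seg2, _⟩ := pos_seg hmono hj'1 hj'N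
  have hy'int := (subtree_iff hr).mp hj'r
  have hy't : tz y' ≤ t := hjmax j' ((hSmem j').mpr ⟨hj'N, hj'r⟩)
  -- the key contradiction machine
  have hmo := hmono.monotoneOn
  have key : ∀ u j1 j2, 1 ≤ j1 → j1 ≤ N → 1 ≤ j2 → j2 ≤ N →
      r < pos a j1 + 2 ^ m → pos a j1 < r + 2 ^ m →
      r < pos a j2 + 2 ^ m → pos a j2 < r + 2 ^ m →
      tz (pos a j1) ≤ t → tz (pos a j2) ≤ t →
      pos a j1 ≤ u → u ≤ pos a j2 → t + 1 ≤ tz u → False := by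
    intro u j1 j2 hj11 hj1N hj21 hj2N hint11 hint12 hint21 hint22 htz1 htz2 hu1 hu2 htzu
    obtain ⟨hseg11, hseg12, _⟩ := pos_seg hmono hj11 hj1N
    obtain ⟨hseg21, hseg22, _⟩ := pos_seg hmono hj21 hj2N
    have ha0 : a 0 ≤ a (j1 - 1) := hmo (by simp) (by simp; omega) (by omega)
    have haN : a j2 ≤ a N := hmo (by simp; omega) (by simp) hj2N
    obtain ⟨l, hl1, hlN, hlu1, hlu2⟩ := seg_exists (N := N) (a := a) (u := u) (by omega) (by omega)
    obtain ⟨hwseg1, hwseg2, hwmax⟩ := pos_seg hmono hl1 hlN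
    set w := pos a l with hw
    have htzw : t + 1 ≤ tz w := le_trans htzu (hwmax u hlu1 hlu2)
    -- w cannot lie in the interval of r
    have hwnot : ¬ (r < w + 2 ^ m ∧ w < r + 2 ^ m) := by
      rintro ⟨hw1, hw2⟩
      have : l ∈ S := (hSmem l).mpr ⟨hlN, (subtree_iff hr).mpr ⟨hw1, hw2⟩⟩
      have := hjmax l this
      simp only [← hw, ← hy, ← ht] at this
      omega
    rcases Nat.lt_or_ge w (r + 2 ^ m) with hcase | hcase
    · -- w + 2^m ≤ r : w is below the interval, peer j1's position lands in segment l
      have hwle : w + 2 ^ m ≤ r := by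
        by_contra h
        exact hwnot ⟨by omega, hcase⟩
      have hwy1 : w < pos a j1 := by omega
      have : j1 = l := seg_unique hmono hj11 hj1N hl1 hlN hseg11 hseg12
        (by omega) (by omega)
      rw [this] at hwy1
      omega
    · -- r + 2^m ≤ w : w is above the interval, peer j2's position lands in segment l
      have hwy2 : pos a j2 < w := by omega
      have : j2 = l := seg_unique hmono hj21 hj2N hl1 hlN hseg21 hseg22
        (by omega) (by omega)
      rw [this] at hwy2
      omega
  -- now show y' ∈ subtree y
  rw [subtree_iff hy0, ← ht]
  by_contra hcon
  rw [not_and_or] at hcon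
  obtain ⟨o, ho, hyd⟩ := tz_decomp hy0
  rw [← ht] at hyd
  obtain ⟨c, hoc⟩ : ∃ c, o = 2 * c + 1 := ⟨o / 2, by rw [Nat.odd_iff] at ho; omega⟩
  have hyc : y = 2 ^ (t+1) * c + 2 ^ t := by rw [hyd, hoc, pow_succ]; ring
  have h2t1 : (1:ℕ) ≤ 2 ^ t := Nat.one_le_two_pow
  rcases hcon with hcon | hcon
  · -- y' + 2^t ≤ y, use u = y - 2^t
    push_neg at hcon
    have hle : y' + 2 ^ t ≤ y := by omega
    set u := y - 2 ^ t with hu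
    have hu0 : u ≠ 0 := by
      have : 1 ≤ y' := Nat.pos_of_ne_zero hy'0
      omega
    have hud : u = 2 ^ (t+1) * c := by omega
    have htzu : t + 1 ≤ tz u := (tz_dvd_iff hu0).mp ⟨c, hud⟩
    exact key u j' j hj'1 hj'N hj1 hjN hy'int.1 hy'int.2 hyint.1 hyint.2
      hy't (le_refl t) (by omega) (by omega) htzu
  · -- y + 2^t ≤ y', use u = y + 2^t
    push_neg at hcon
    have hle : y + 2 ^ t ≤ y' := by omega
    set u := y + 2 ^ t with hu
    have hu0 : u ≠ 0 := by omega
    have hud : u = 2 ^ (t+1) * (c + 1) := by rw [hu, hyc]; ring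
    have htzu : t + 1 ≤ tz u := (tz_dvd_iff hu0).mp ⟨c + 1, hud⟩
    exact key u j j' hj1 hjN hj'1 hj'N hyint.1 hyint.2 hy'int.1 hy'int.2
      (le_refl t) hy't (by omega) (by omega) htzu

theorem stmt11 (d N : ℕ) (a : ℕ → ℕ) (hN : 1 ≤ N)
    (hmono : StrictMonoOn a (Set.Iic N)) (hlt : a N < 2 ^ d)
    (i : ℕ) (hi : i ≤ N) (hk : 1 ≤ tz (pos a i)) :
    ((∃ j ≤ N, pos a j ∈ subtree (CW (pos a i))) →
      ∃ j ≤ N, pos a j ∈ subtree (CW (pos a i)) ∧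
        ∀ j' ≤ N, pos a j' ∈ subtree (CW (pos a i)) → pos a j' ∈ subtree (pos a j)) ∧
    ((∃ j ≤ N, pos a j ∈ subtree (CCW (pos a i))) →
      ∃ j ≤ N, pos a j ∈ subtree (CCW (pos a i)) ∧
        ∀ j' ≤ N, pos a j' ∈ subtree (CCW (pos a i)) → pos a j' ∈ subtree (pos a j)) := by
  have hx0 : pos a i ≠ 0 := by
    intro h
    rw [h] at hk
    simp [tz] at hk
  have htz : tz (pos a i) = (tz (pos a i) - 1) + 1 := by omega
  obtain ⟨_, _, _, _, _, hcw0, hccw0⟩ := children hx0 htz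
  exact ⟨fun h => main_lemma hmono hcw0 h, fun h => main_lemma hmono hccw0 h⟩
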